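/- Let X be a crowded topological space that is OHI (every nonempty open subspace is irresolvable). If A ⊆ X has empty interior, then the interior of X \ A is dense in X. -/
import Mathlib

set_option autoImplicit false

open Set

/-- if `X` is a crowded OHI space (every nonempty open subspace is
irresolvable) and `A ⊆ X` has empty interior, then the interior of `X \ A` is dense. -/
theorem interior_compl_dense_of_ohi {X : Type*} [TopologicalSpace X]
    (hcrowded : ∀ x : X, ¬ IsOpen ({x} : Set X))
    (hOHI : ∀ U : Set X, IsOpen U → U.Nonempty →
      ¬ ∃ D : Set U, Dense D ∧ Dense Dᶜ)
    (A : Set X) (hA : interior A = ∅) :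
    Dense (interior Aᶜ) := by
  have hAc : Dense (Aᶜ) := by
    rwa [← interior_eq_empty_iff_dense_compl]
  rw [dense_iff_inter_open]
  by_contra h
  push_neg at h
  obtain ⟨U, hU, hUne, hdisj⟩ := h
  refine hOHI U hU hUne ⟨Subtype.val ⁻¹' A, ?_, ?_⟩
  · -- A ∩ U is dense in U
    rw [dense_iff_inter_open]
    rintro V hV hVne
    rw [isOpen_induced_iff] at hV
    obtain ⟨W, hW, rfl⟩ := hV
    obtain ⟨x, hxW⟩ := hVne
    -- W ∩ U is open nonempty; it must meet A
    by_contra hcon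
    rw [Set.not_nonempty_iff_eq_empty] at hcon
    have hsub : W ∩ U ⊆ Aᶜ := by
      rintro y ⟨hyW, hyU⟩ hyA
      have : (⟨y, hyU⟩ : U) ∈ (Subtype.val ⁻¹' W) ∩ (Subtype.val ⁻¹' A) := ⟨hyW, hyA⟩
      rw [hcon] at this
      exact this
    have hopen : IsOpen (W ∩ U) := hW.inter hU
    have : W ∩ U ⊆ interior Aᶜ := hopen.subset_interior_iff.mpr hsub
    have hx : (x : X) ∈ U ∩ interior Aᶜ := ⟨x.2, this ⟨hxW, x.2⟩⟩
    rw [hdisj] at hx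
    exact hx
  · -- Aᶜ ∩ U is dense in U
    rw [dense_iff_inter_open]
    rintro V hV hVne
    rw [isOpen_induced_iff] at hV
    obtain ⟨W, hW, rfl⟩ := hV
    obtain ⟨x, hxW⟩ := hVne
    have hopen : IsOpen (W ∩ U) := hW.inter hU
    obtain ⟨y, hy, hyAc⟩ := hAc.inter_open_nonempty _ hopen ⟨x, hxW, x.2⟩
    exact ⟨⟨y, hy.2⟩, hy.1, hyAc⟩
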